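/- Let H be a finite-dimensional real inner product space and U₀, U₁ orthogonal operators on H. Then (-1)^{dim ker(I + U₀*U₁)} = det(U₀)·det(U₁). -/

import Mathlib

open Module

/-- det of the adjoint equals det, on a real f.d. inner product space. -/
lemma det_adjoint_aux {E : Type*} [NormedAddCommGroup E] [InnerProductSpace ℝ E]
    [FiniteDimensional ℝ E] (f : E →ₗ[ℝ] E) :
    LinearMap.det (LinearMap.adjoint f) = LinearMap.det f := by
  let b := stdOrthonormalBasis ℝ E
  rw [← LinearMap.det_toMatrix b.toBasis, ← LinearMap.det_toMatrix b.toBasis,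
    LinearMap.toMatrix_adjoint, Matrix.det_conjTranspose]
  simp

/-- Main auxiliary lemma: for an orthogonal operator V,
`(-1)^{dim ker(1+V)} = det V`. -/
lemma key_aux {E : Type*} [NormedAddCommGroup E] [InnerProductSpace ℝ E]
    [FiniteDimensional ℝ E] (V : E →ₗ[ℝ] E)
    (hV : LinearMap.adjoint V * V = 1) :
    (-1 : ℝ) ^ finrank ℝ ↥(LinearMap.ker (1 + V)) = LinearMap.det V := by
  have hV' : V * LinearMap.adjoint V = 1 := mul_eq_one_comm.mp hV
  set W := LinearMap.ker (1 + V) with hW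
  have memW : ∀ x : E, x ∈ W ↔ V x = -x := by
    intro x
    simp only [hW, LinearMap.mem_ker, LinearMap.add_apply, Module.End.one_apply]
    constructor
    · intro h; linear_combination (norm := module) h
    · intro h; linear_combination (norm := module) h
  have hVVadj : ∀ x : E, LinearMap.adjoint V (V x) = x := fun x =>
    congrFun (congrArg DFunLike.coe hV) x
  have hVadjV : ∀ x : E, V (LinearMap.adjoint V x) = x := fun x =>
    congrFun (congrArg DFunLike.coe hV') x
  have hadjW : ∀ x ∈ W, LinearMap.adjoint V x = -x := by
    intro x hx
    rw [memW] at hx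
    have := hVVadj x
    rw [hx, map_neg] at this
    exact neg_eq_iff_eq_neg.mp this
  -- V preserves W and Wᗮ
  have h₁ : ∀ x ∈ W, V x ∈ W := by
    intro x hx
    rw [memW] at hx ⊢
    rw [hx, map_neg, hx]
  have h₂ : ∀ x ∈ Wᗮ, V x ∈ Wᗮ := by
    intro x hx
    rw [Submodule.mem_orthogonal]
    intro y hy
    rw [← LinearMap.adjoint_inner_left, hadjW y hy, inner_neg_left,
      Submodule.inner_right_of_mem_orthogonal hy hx, neg_zero]
  have h₂' : ∀ x ∈ Wᗮ, LinearMap.adjoint V x ∈ Wᗮ := by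
    intro x hx
    rw [Submodule.mem_orthogonal]
    intro y hy
    rw [LinearMap.adjoint_inner_right, (memW y).mp hy, inner_neg_left,
      Submodule.inner_right_of_mem_orthogonal hy hx, neg_zero]
  -- split E as W × Wᗮ
  let e : (W × Wᗮ) ≃ₗ[ℝ] E := W.prodEquivOfIsCompl Wᗮ W.isCompl_orthogonal
  let f₁ : W →ₗ[ℝ] W := V.restrict h₁
  let f₂ : Wᗮ →ₗ[ℝ] Wᗮ := V.restrict h₂
  have hVe' : V ∘ₗ e.toLinearMap = e.toLinearMap ∘ₗ (f₁.prodMap f₂) := by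
    apply LinearMap.ext
    rintro ⟨a, b⟩
    simp only [LinearMap.coe_comp, LinearEquiv.coe_coe, Function.comp_apply,
      LinearMap.prodMap_apply]
    have h1 : e (a, b) = (a : E) + (b : E) := rfl
    have h2 : e (f₁ a, f₂ b) = (f₁ a : E) + (f₂ b : E) := rfl
    rw [h1, h2, map_add]
    rfl
  have hVe : V = e.toLinearMap ∘ₗ (f₁.prodMap f₂) ∘ₗ e.symm.toLinearMap := by
    apply LinearMap.ext
    intro x
    have := congrFun (congrArg DFunLike.coe hVe') (e.symm x)
    simpa using this
  have hdet : LinearMap.det V = LinearMap.det (f₁.prodMap f₂) := by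
    rw [hVe]
    exact LinearMap.det_conj (f₁.prodMap f₂) e
  -- det of prodMap
  have hdetprod : LinearMap.det (f₁.prodMap f₂) = LinearMap.det f₁ * LinearMap.det f₂ := by
    let b₁ := finBasis ℝ W
    let b₂ := finBasis ℝ Wᗮ
    rw [← LinearMap.det_toMatrix (b₁.prod b₂), LinearMap.toMatrix_prodMap,
      Matrix.det_fromBlocks_zero₂₁, LinearMap.det_toMatrix, LinearMap.det_toMatrix]
  -- f₁ = -1
  have hf₁ : f₁ = -(1 : W →ₗ[ℝ] W) := by
    apply LinearMap.ext
    intro x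
    apply Subtype.ext
    have : (f₁ x : E) = V x := rfl
    rw [this, (memW x).mp x.2]
    rfl
  have hdet₁ : LinearMap.det f₁ = (-1 : ℝ) ^ finrank ℝ W := by
    rw [hf₁]
    rw [← neg_one_smul ℝ (1 : W →ₗ[ℝ] W), LinearMap.det_smul, map_one, mul_one]
  -- f₂ is orthogonal with no -1 eigenvalue, so det f₂ = 1
  let g : Wᗮ →ₗ[ℝ] Wᗮ := (LinearMap.adjoint V).restrict h₂'
  have hg : g = LinearMap.adjoint f₂ := by
    rw [LinearMap.eq_adjoint_iff]
    intro x y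
    have hgx : (g x : E) = LinearMap.adjoint V x := rfl
    have hfy : (f₂ y : E) = V y := rfl
    rw [Submodule.coe_inner, Submodule.coe_inner, hgx, hfy, LinearMap.adjoint_inner_left]
  have hgf₂ : g * f₂ = 1 := by
    apply LinearMap.ext
    intro x
    apply Subtype.ext
    have : ((g * f₂) x : E) = LinearMap.adjoint V (V x) := rfl
    rw [this, hVVadj]
    rfl
  have hker₂ : LinearMap.ker (1 + f₂) = ⊥ := by
    rw [LinearMap.ker_eq_bot']
    intro x hx
    have hx' : (x : E) + V x = 0 := by
      have := congrArg (Subtype.val) hx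
      simp at this; exact this
    have hxW : (x : E) ∈ W := by
      rw [memW]
      linear_combination (norm := module) hx'
    have := Submodule.inner_right_of_mem_orthogonal hxW x.2
    apply Subtype.ext
    simpa using inner_self_eq_zero.mp (by rw [real_inner_comm] at this; exact this)
  have hdetA : LinearMap.det (1 + f₂) ≠ 0 := by
    intro h
    have := LinearMap.bot_lt_ker_of_det_eq_zero h
    rw [hker₂] at this
    exact lt_irrefl _ this
  have hadj1 : LinearMap.adjoint (1 : Wᗮ →ₗ[ℝ] Wᗮ) = 1 := by
    rw [← LinearMap.star_eq_adjoint, star_one]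
  have hadjA : LinearMap.adjoint (1 + f₂) = g * (1 + f₂) := by
    rw [map_add, hadj1, ← hg, mul_add, mul_one, hgf₂, add_comm]
  have hdetg : LinearMap.det g = 1 := by
    have h1 : LinearMap.det (LinearMap.adjoint (1 + f₂)) = LinearMap.det (1 + f₂) :=
      det_adjoint_aux _
    rw [hadjA, map_mul] at h1
    exact mul_right_cancel₀ hdetA (h1.trans (one_mul _).symm)
  have hdet₂ : LinearMap.det f₂ = 1 := by
    have := congrArg LinearMap.det hgf₂
    rw [map_mul, map_one, hdetg, one_mul] at this
    exact this
  rw [hdet, hdetprod, hdet₁, hdet₂, mul_one]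

/-- For orthogonal operators `U₀, U₁` on a finite-dimensional real inner product
space, `(-1)^{dim ker(I + U₀*U₁)} = det U₀ · det U₁`. -/
theorem stmt10 {H : Type*} [NormedAddCommGroup H] [InnerProductSpace ℝ H]
    [FiniteDimensional ℝ H]
    (U₀ U₁ : H →ₗ[ℝ] H)
    (hU₀ : LinearMap.adjoint U₀ * U₀ = 1) (hU₁ : LinearMap.adjoint U₁ * U₁ = 1) :
    (-1 : ℝ) ^ Module.finrank ℝ ↥(LinearMap.ker (1 + LinearMap.adjoint U₀ * U₁)) =
      LinearMap.det U₀ * LinearMap.det U₁ := by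
  have hU₀' : U₀ * LinearMap.adjoint U₀ = 1 := mul_eq_one_comm.mp hU₀
  have hV : LinearMap.adjoint (LinearMap.adjoint U₀ * U₁) * (LinearMap.adjoint U₀ * U₁) = 1 := by
    rw [← LinearMap.star_eq_adjoint, star_mul, LinearMap.star_eq_adjoint,
      LinearMap.star_eq_adjoint, LinearMap.adjoint_adjoint, mul_assoc, ← mul_assoc U₀,
      hU₀', one_mul, hU₁]
  rw [key_aux _ hV, map_mul, det_adjoint_aux]
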